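/- For the star K_{1,t-1} on t vertices and n sufficiently large, the maximum running time of the K_{1,t-1}-bootstrap process on n-vertex graphs equals t − 1. -/

import Mathlib

open SimpleGraph Finset

/-- `f` maps `H` to a copy of `H` inside `G`. -/
def IsCopyOf {α V : Type*} (H : SimpleGraph α) (G : SimpleGraph V) (f : α → V) : Prop :=
  Function.Injective f ∧ ∀ a b, H.Adj a b → G.Adj (f a) (f b)

/-- One round of the `H`-bootstrap process: add every edge whose addition
creates a new copy of `H` (i.e. the edge is the last missing edge of a copy of `H`). -/
def bootStep {α V : Type*} (H : SimpleGraph α) (G : SimpleGraph V) : SimpleGraph V where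
  Adj u v := G.Adj u v ∨ (u ≠ v ∧ ∃ f : α → V,
      IsCopyOf H (G ⊔ SimpleGraph.fromEdgeSet {s(u, v)}) f ∧
      ∃ a b, H.Adj a b ∧ f a = u ∧ f b = v)
  symm := by
    constructor
    intro u v h
    rcases h with h | ⟨hne, f, hf, a, b, hab, hfa, hfb⟩
    · exact Or.inl h.symm
    · refine Or.inr ⟨hne.symm, f, ?_, b, a, hab.symm, hfb, hfa⟩
      rwa [Sym2.eq_swap]
  loopless := by
    constructor
    intro u h
    rcases h with h | ⟨hne, _⟩
    · exact G.irrefl h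
    · exact hne rfl

/-- The `H`-bootstrap process on starting graph `G`. -/
def bootProc {α V : Type*} (H : SimpleGraph α) (G : SimpleGraph V) : ℕ → SimpleGraph V
  | 0 => G
  | (n + 1) => bootStep H (bootProc H G n)

/-- The running time of the `H`-process on `G`: the least `t` with `G_{t+1} = G_t`. -/
noncomputable def bootRunTime {α V : Type*} (H : SimpleGraph α) (G : SimpleGraph V) : ℕ :=
  sInf {t | bootProc H G (t + 1) = bootProc H G t}

/-- The final (stabilised) graph of the `H`-process on `G`. -/
noncomputable def bootFinal {α V : Type*} (H : SimpleGraph α) (G : SimpleGraph V) :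
    SimpleGraph V :=
  bootProc H G (bootRunTime H G)

section Generic

variable {α V : Type*} {H : SimpleGraph α}

lemma le_bootStep (H : SimpleGraph α) (G : SimpleGraph V) : G ≤ bootStep H G :=
  fun _ _ h => Or.inl h

lemma bootProc_succ (H : SimpleGraph α) (G : SimpleGraph V) (k : ℕ) :
    bootProc H G (k + 1) = bootStep H (bootProc H G k) := rfl

lemma le_bootProc (H : SimpleGraph α) (G : SimpleGraph V) (k : ℕ) :
    G ≤ bootProc H G k := by
  induction k with
  | zero => exact le_rfl
  | succ k ih => exact ih.trans (le_bootStep H _)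

lemma bootProc_stable (H : SimpleGraph α) (G : SimpleGraph V) {k m : ℕ}
    (h : bootProc H G (k + 1) = bootProc H G k) (hkm : k ≤ m) :
    bootProc H G (m + 1) = bootProc H G m := by
  induction m, hkm using Nat.le_induction with
  | base => exact h
  | succ m hm ih =>
    calc bootProc H G (m+2) = bootStep H (bootProc H G (m+1)) := rfl
      _ = bootStep H (bootProc H G m) := by rw [ih]
      _ = bootProc H G (m+1) := rfl

end Generic

section StepLemma

variable {n : ℕ}

/-- degree via ncard -/
noncomputable def dgr (G : SimpleGraph (Fin n)) (u : Fin n) : ℕ := (G.neighborSet u).ncard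

lemma sup_single_adj (G : SimpleGraph (Fin n)) (u v x y : Fin n) :
    (G ⊔ SimpleGraph.fromEdgeSet {s(u,v)}).Adj x y ↔
      G.Adj x y ∨ (s(x,y) = s(u,v) ∧ x ≠ y) := by
  simp [SimpleGraph.fromEdgeSet_adj]

lemma center_degree {t : ℕ} (G : SimpleGraph (Fin n)) {u v : Fin n} (hne : u ≠ v)
    (g : Fin (t-1) → Fin n) (hg : Function.Injective g)
    (hadj : ∀ i, (G ⊔ SimpleGraph.fromEdgeSet {s(u,v)}).Adj u (g i)) :
    t - 2 ≤ dgr G u := by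
  have hsub : Set.range g \ {v} ⊆ G.neighborSet u := by
    rintro w ⟨⟨i, rfl⟩, hwv⟩
    have h := (sup_single_adj G u v u (g i)).1 (hadj i)
    rcases h with h | ⟨hs, _⟩
    · exact h
    · rw [Sym2.congr_right] at hs
      exact absurd hs hwv
  have h1 : (Set.range g).ncard = t - 1 := by
    rw [← Set.image_univ, Set.ncard_image_of_injective _ hg, Set.ncard_univ]
    simp
  have h2 : Set.range g ⊆ insert v (Set.range g \ {v}) := by
    intro w hw
    by_cases hwv : w = v
    · exact hwv ▸ Set.mem_insert _ _
    · exact Set.mem_insert_of_mem _ ⟨hw, hwv⟩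
  have h3 : t - 1 ≤ 1 + (Set.range g \ {v}).ncard := by
    calc t - 1 = (Set.range g).ncard := h1.symm
      _ ≤ (insert v (Set.range g \ {v})).ncard := Set.ncard_le_ncard h2 (Set.toFinite _)
      _ ≤ (Set.range g \ {v}).ncard + 1 := Set.ncard_insert_le _ _
      _ ≤ 1 + (Set.range g \ {v}).ncard := by omega
  have h4 := Set.ncard_le_ncard hsub (Set.toFinite _)
  unfold dgr
  omega

lemma step_adj_of_deg {t : ℕ} (ht : 2 ≤ t) (G : SimpleGraph (Fin n)) {u v : Fin n}
    (hne : u ≠ v) (hd : t - 2 ≤ dgr G u) :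
    (bootStep (completeBipartiteGraph (Fin 1) (Fin (t-1))) G).Adj u v := by
  by_cases hGuv : G.Adj u v
  · exact Or.inl hGuv
  refine Or.inr ⟨hne, ?_⟩
  obtain ⟨s0, hs0sub, hs0card⟩ := Set.exists_subset_card_eq hd
  have hvns : v ∉ s0 := fun h => hGuv (hs0sub h)
  have hfinT : (insert v s0 : Set (Fin n)).Finite := Set.toFinite _
  have huns : u ∉ (insert v s0 : Set (Fin n)) := by
    rintro (rfl | h)
    · exact hne rfl
    · exact G.irrefl (hs0sub h)
  have hTcard : (insert v s0 : Set (Fin n)).ncard = t - 1 := by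
    rw [Set.ncard_insert_of_notMem hvns (Set.toFinite _), hs0card]
    omega
  have hTcard' : hfinT.toFinset.card = t - 1 := by
    rw [← Set.ncard_eq_toFinset_card _ hfinT]
    exact hTcard
  set g : Fin (t-1) → Fin n := fun i => (hfinT.toFinset.orderIsoOfFin hTcard' i : Fin n) with hgdef
  have hgmem : ∀ i, g i ∈ (insert v s0 : Set (Fin n)) := fun i =>
    (Set.Finite.mem_toFinset _).1 (hfinT.toFinset.orderIsoOfFin hTcard' i).2
  have hginj : Function.Injective g := by
    intro a b hab
    have := Subtype.ext hab
    exact (hfinT.toFinset.orderIsoOfFin hTcard').injective this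
  obtain ⟨i0, hi0⟩ : ∃ i, g i = v := by
    have hv : v ∈ hfinT.toFinset := (Set.Finite.mem_toFinset _).2 (Set.mem_insert _ _)
    refine ⟨(hfinT.toFinset.orderIsoOfFin hTcard').symm ⟨v, hv⟩, ?_⟩
    exact congrArg Subtype.val ((hfinT.toFinset.orderIsoOfFin hTcard').apply_symm_apply ⟨v, hv⟩)
  have hadjg : ∀ i, (G ⊔ SimpleGraph.fromEdgeSet {s(u,v)}).Adj u (g i) := by
    intro i
    rcases hgmem i with h | h
    · refine (sup_single_adj G u v u (g i)).2 (Or.inr ⟨?_, ?_⟩)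
      · rw [Sym2.congr_right]; exact h
      · rw [h]; exact hne
    · exact (sup_single_adj G u v u (g i)).2 (Or.inl (hs0sub h))
  refine ⟨Sum.elim (fun _ => u) g, ⟨?_, ?_⟩, Sum.inl 0, Sum.inr i0, ?_, rfl, hi0⟩
  · rintro (a | a) (b | b) hab
    · simp [Subsingleton.elim a b]
    · simp only [Sum.elim_inl, Sum.elim_inr] at hab
      have hm := hgmem b
      rw [← hab] at hm
      exact absurd hm huns
    · simp only [Sum.elim_inl, Sum.elim_inr] at hab
      have hm := hgmem a
      rw [hab] at hm
      exact absurd hm huns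
    · exact congrArg Sum.inr (hginj hab)
  · rintro (a | a) (b | b) hab <;> simp at hab
    · exact hadjg b
    · exact (hadjg a).symm
  · simp

lemma bootStep_star_adj {t : ℕ} (ht : 2 ≤ t) (G : SimpleGraph (Fin n)) (u v : Fin n) :
    (bootStep (completeBipartiteGraph (Fin 1) (Fin (t-1))) G).Adj u v ↔
      G.Adj u v ∨ (u ≠ v ∧ (t - 2 ≤ dgr G u ∨ t - 2 ≤ dgr G v)) := by
  constructor
  · rintro (h | ⟨hne, f, ⟨finj, fadj⟩, a, b, hab, rfl, rfl⟩)
    · exact Or.inl h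
    refine Or.inr ⟨hne, ?_⟩
    rcases a with a | a <;> rcases b with b | b <;> simp at hab
    · -- center is f (inl a) = u
      left
      refine center_degree G hne (fun i => f (Sum.inr i)) (fun i j hij => ?_) (fun i => ?_)
      · cases Sum.inr_injective (finj hij); rfl
      · exact fadj (Sum.inl a) (Sum.inr i) (by simp)
    · -- center is f (inl b) = v
      right
      have hswap : (G ⊔ SimpleGraph.fromEdgeSet {s(f (Sum.inr a), f (Sum.inl b))})
          = (G ⊔ SimpleGraph.fromEdgeSet {s(f (Sum.inl b), f (Sum.inr a))}) := by
        rw [Sym2.eq_swap]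
      refine center_degree G hne.symm (fun i => f (Sum.inr i)) (fun i j hij => ?_) (fun i => ?_)
      · cases Sum.inr_injective (finj hij); rfl
      · rw [← hswap]; exact fadj (Sum.inl b) (Sum.inr i) (by simp)
  · rintro (h | ⟨hne, hd | hd⟩)
    · exact Or.inl h
    · exact step_adj_of_deg ht G hne hd
    · exact (step_adj_of_deg ht G hne.symm hd).symm

end StepLemma

section Upper

variable {n : ℕ}

/-- vertices adjacent to everything else -/
def FullV (G : SimpleGraph (Fin n)) : Set (Fin n) := {v | ∀ u, u ≠ v → G.Adj v u}

lemma stable_of_big {t : ℕ} (ht : 2 ≤ t) (hn : t ≤ n) (G : SimpleGraph (Fin n)) :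
    ∃ k ≤ t - 1, bootProc (completeBipartiteGraph (Fin 1) (Fin (t-1))) G (k+1)
      = bootProc (completeBipartiteGraph (Fin 1) (Fin (t-1))) G k := by
  set H := completeBipartiteGraph (Fin 1) (Fin (t-1)) with hH
  by_cases hex : ∃ j, j < t - 1 ∧ bootProc H G (j+1) = bootProc H G j
  · obtain ⟨j, hj, hst⟩ := hex
    exact ⟨j, hj.le, hst⟩
  push_neg at hex
  have grow : ∀ k, k ≤ t - 2 → k ≤ (FullV (bootProc H G k)).ncard := by
    intro k
    induction k with
    | zero => intro _; exact Nat.zero_le _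
    | succ k ih =>
      intro hk1
      have hk : k ≤ t - 2 := by omega
      have hne := hex k (by omega)
      obtain ⟨u, v, h1, h0⟩ : ∃ u v, (bootProc H G (k+1)).Adj u v ∧ ¬(bootProc H G k).Adj u v := by
        by_contra hc
        push_neg at hc
        exact hne (le_antisymm (fun u v h => hc u v h) (le_bootStep H _))
      rw [bootProc_succ, bootStep_star_adj ht] at h1
      have key : ∀ w z : Fin n, t - 2 ≤ dgr (bootProc H G k) w →
          ¬(bootProc H G k).Adj w z → z ≠ w → k + 1 ≤ (FullV (bootProc H G (k+1))).ncard := by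
        intro w z hdw hnadj hzw
        have hwnotfull : w ∉ FullV (bootProc H G k) := fun hw => hnadj (hw z hzw)
        have hwfull : w ∈ FullV (bootProc H G (k+1)) := by
          intro u' hu'
          rw [bootProc_succ]
          exact step_adj_of_deg ht _ (Ne.symm hu') hdw
        have hmono : FullV (bootProc H G k) ⊆ FullV (bootProc H G (k+1)) := by
          intro x hx u' hu'
          exact (le_bootStep H _) (hx u' hu')
        have hins : insert w (FullV (bootProc H G k)) ⊆ FullV (bootProc H G (k+1)) := by
          rintro x (rfl | hx)
          · exact hwfull
          · exact hmono hx
        calc k + 1 ≤ (FullV (bootProc H G k)).ncard + 1 := by omega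
          _ = (insert w (FullV (bootProc H G k))).ncard :=
              (Set.ncard_insert_of_notMem hwnotfull (Set.toFinite _)).symm
          _ ≤ _ := Set.ncard_le_ncard hins (Set.toFinite _)
      rcases h1 with h | ⟨hne', hd | hd⟩
      · exact absurd h h0
      · exact key u v hd h0 (Ne.symm hne')
      · exact key v u hd (fun h => h0 h.symm) hne'
  have hdeg : ∀ v, t - 2 ≤ dgr (bootProc H G (t-2)) v := by
    intro v
    have hF := grow (t-2) le_rfl
    by_cases hv : v ∈ FullV (bootProc H G (t-2))
    · have hsub : ({v}ᶜ : Set (Fin n)) ⊆ (bootProc H G (t-2)).neighborSet v :=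
        fun u hu => hv u hu
      have hcard : ({v}ᶜ : Set (Fin n)).ncard = n - 1 := by
        have : ({v}ᶜ : Set (Fin n)) = Set.univ \ {v} := by
          ext; simp
        rw [this, Set.ncard_diff_singleton_of_mem (Set.mem_univ v), Set.ncard_univ]
        simp
      have := Set.ncard_le_ncard hsub (Set.toFinite _)
      unfold dgr
      omega
    · have hsub : FullV (bootProc H G (t-2)) ⊆ (bootProc H G (t-2)).neighborSet v := by
        intro w hw
        have hwv : v ≠ w := fun h => hv (h ▸ hw)
        exact (hw v hwv).symm
      have := Set.ncard_le_ncard hsub (Set.toFinite _)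
      unfold dgr
      omega
  refine ⟨t - 1, le_rfl, ?_⟩
  have htop : bootProc H G (t-1) = ⊤ := by
    have h21 : bootProc H G (t-1) = bootStep H (bootProc H G (t-2)) := by
      rw [congrArg (bootProc H G) (by omega : t - 1 = (t-2) + 1), bootProc_succ]
    rw [h21]
    ext u v
    simp only [SimpleGraph.top_adj]
    constructor
    · exact fun h => (bootStep H _).ne_of_adj h
    · intro hne'
      exact step_adj_of_deg ht _ hne' (hdeg u)
  rw [bootProc_succ, htop]
  exact le_antisymm le_top (htop ▸ le_bootStep H _)

end Upper

section Construction

/-- block start offsets: `sb k` is the start of the block of the star with `k+1` leaves -/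
def sb : ℕ → ℕ
  | 0 => 0
  | k+1 => sb k + k + 2

/-- start of the block of the star with `s` leaves (for `s ≥ 1`) -/
def ctr (s : ℕ) : ℕ := sb (s - 1)

lemma sb_mono : Monotone sb := by
  apply monotone_nat_of_le_succ
  intro k
  show sb k ≤ sb k + k + 2
  omega

lemma ctr_mono {s s' : ℕ} (h : s ≤ s') : ctr s ≤ ctr s' := sb_mono (by omega)

lemma ctr_block_lt {s s' : ℕ} (hs : 1 ≤ s) (h : s < s') : ctr s + s < ctr s' := by
  have h1 : sb ((s-1)+1) = sb (s-1) + (s-1) + 2 := rfl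
  have h2 : sb ((s-1)+1) ≤ sb (s'-1) := sb_mono (by omega)
  unfold ctr
  omega

lemma ctr_add_le {s m : ℕ} (hs : 1 ≤ s) (h : s ≤ m) : ctr s + s ≤ ctr m + m := by
  rcases eq_or_lt_of_le h with rfl | hlt
  · exact le_rfl
  · have := ctr_block_lt hs hlt
    omega

lemma ctr_inj {s s' : ℕ} (hs : 1 ≤ s) (hs' : 1 ≤ s') (h : ctr s = ctr s') : s = s' := by
  rcases Nat.lt_trichotomy s s' with hlt | heq | hlt
  · have := ctr_block_lt hs hlt; omega
  · exact heq
  · have := ctr_block_lt hs' hlt; omega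

lemma sb_le (k : ℕ) : sb k ≤ k * k + 2 * k := by
  induction k with
  | zero => simp [sb]
  | succ k ih =>
    show sb k + k + 2 ≤ _
    nlinarith

/-- the starting graph: disjoint stars with `s` leaves for `1 ≤ s ≤ t-2`,
remaining vertices isolated. -/
def G0 (t n : ℕ) : SimpleGraph (Fin n) where
  Adj u v := ∃ s, 1 ≤ s ∧ s ≤ t - 2 ∧
    (((u:ℕ) = ctr s ∧ ctr s < (v:ℕ) ∧ (v:ℕ) ≤ ctr s + s) ∨
     ((v:ℕ) = ctr s ∧ ctr s < (u:ℕ) ∧ (u:ℕ) ≤ ctr s + s))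
  symm := by
    constructor
    rintro u v ⟨s, h1, h2, h3⟩
    exact ⟨s, h1, h2, h3.symm⟩
  loopless := by
    constructor
    rintro u ⟨s, h1, h2, (⟨ha, hb, hc⟩ | ⟨ha, hb, hc⟩)⟩ <;> omega

lemma G0_center_nbr {t n : ℕ} {s : ℕ} (hs1 : 1 ≤ s) (hs2 : s ≤ t - 2) {v w : Fin n}
    (hv : (v:ℕ) = ctr s) (h : (G0 t n).Adj v w) :
    ctr s < (w:ℕ) ∧ (w:ℕ) ≤ ctr s + s := by
  obtain ⟨s', h1, h2, (⟨ha, hb, hc⟩ | ⟨ha, hb, hc⟩)⟩ := h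
  · have : s' = s := ctr_inj h1 hs1 (by omega)
    subst this
    omega
  · -- v in interior of block s': impossible since v is a block start
    exfalso
    rcases Nat.lt_trichotomy s s' with hlt | heq | hlt
    · have := ctr_mono hlt.le; omega
    · subst heq; omega
    · have := ctr_block_lt h1 hlt; omega

lemma G0_adj_center {t n : ℕ} {s : ℕ} (hs1 : 1 ≤ s) (hs2 : s ≤ t - 2) {v w : Fin n}
    (hv : (v:ℕ) = ctr s) (hw1 : ctr s < (w:ℕ)) (hw2 : (w:ℕ) ≤ ctr s + s) :
    (G0 t n).Adj v w :=
  ⟨s, hs1, hs2, Or.inl ⟨hv, hw1, hw2⟩⟩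

lemma G0_noncenter_subsingleton {t n : ℕ} {v : Fin n}
    (hv : ¬∃ s, 1 ≤ s ∧ s ≤ t - 2 ∧ (v:ℕ) = ctr s) :
    ((G0 t n).neighborSet v).Subsingleton := by
  intro w1 hw1 w2 hw2
  obtain ⟨s1, ha1, hb1, hc1⟩ := hw1
  obtain ⟨s2, ha2, hb2, hc2⟩ := hw2
  rcases hc1 with ⟨h1, h2, h3⟩ | ⟨h1, h2, h3⟩
  · exact absurd ⟨s1, ha1, hb1, h1⟩ hv
  rcases hc2 with ⟨h1', h2', h3'⟩ | ⟨h1', h2', h3'⟩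
  · exact absurd ⟨s2, ha2, hb2, h1'⟩ hv
  have hss : s1 = s2 := by
    rcases Nat.lt_trichotomy s1 s2 with hlt | heq | hlt
    · have := ctr_block_lt ha1 hlt; omega
    · exact heq
    · have := ctr_block_lt ha2 hlt; omega
  subst hss
  exact Fin.ext (by omega)

lemma G0_iso {t n : ℕ} {v : Fin n} (hv : ctr (t-2) + (t-2) < (v:ℕ)) :
    (G0 t n).neighborSet v = ∅ := by
  ext w
  simp only [SimpleGraph.mem_neighborSet, Set.mem_empty_iff_false, iff_false]
  rintro ⟨s, h1, h2, (⟨ha, hb, hc⟩ | ⟨ha, hb, hc⟩)⟩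
  · have := ctr_mono h2; have := ctr_add_le h1 h2; omega
  · have := ctr_add_le h1 h2; omega

end Construction

section Invariants

variable {n : ℕ}

lemma ncard_le_card_of_val {A : Set (Fin n)} {B : Finset ℕ} (h : ∀ v ∈ A, (v:ℕ) ∈ B) :
    A.ncard ≤ B.card := by
  rw [← Set.ncard_coe_finset B]
  exact Set.ncard_le_ncard_of_injOn (fun v : Fin n => (v:ℕ)) (fun v hv => by simpa using h v hv)
    (Fin.val_injective.injOn) (B.finite_toSet)

lemma card_le_ncard_of_val {A : Set (Fin n)} {B : Finset ℕ} (hB : ∀ m ∈ B, m < n)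
    (h : ∀ v : Fin n, (v:ℕ) ∈ B → v ∈ A) : B.card ≤ A.ncard := by
  have h1 : ↑(B.attachFin hB) ⊆ A := by
    intro v hv
    exact h v ((Finset.mem_attachFin hB).1 hv)
  calc B.card = (B.attachFin hB).card := (Finset.card_attachFin B hB).symm
    _ = (↑(B.attachFin hB) : Set (Fin n)).ncard := (Set.ncard_coe_finset _).symm
    _ ≤ A.ncard := Set.ncard_le_ncard h1 (Set.toFinite A)

/-- The set of "hot" centres after `k` rounds. -/
def Dset (t n k : ℕ) : Set (Fin n) := {v | ∃ s, t - 1 - k ≤ s ∧ s ≤ t - 2 ∧ (v:ℕ) = ctr s}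

lemma Dset_mono {t n : ℕ} {k k' : ℕ} (h : k ≤ k') : Dset t n k ⊆ Dset t n k' := by
  rintro v ⟨s, h1, h2, h3⟩
  exact ⟨s, by omega, h2, h3⟩

lemma Dset_card {t : ℕ} (ht : 2 ≤ t) (k : ℕ) : (Dset t n k).ncard ≤ k := by
  refine le_trans (ncard_le_card_of_val (B := (Finset.Icc (t-1-k) (t-2)).image ctr) ?_) ?_
  · rintro v ⟨s, h1, h2, h3⟩
    exact Finset.mem_image.2 ⟨s, Finset.mem_Icc.2 ⟨h1, h2⟩, h3.symm⟩
  · refine le_trans Finset.card_image_le ?_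
    rw [Nat.card_Icc]
    omega

/-- The process started from the stars construction. -/
abbrev GP (t n k : ℕ) : SimpleGraph (Fin n) :=
  bootProc (completeBipartiteGraph (Fin 1) (Fin (t-1))) (G0 t n) k

lemma invR {t : ℕ} (ht : 2 ≤ t) :
    ∀ k, k ≤ t - 3 → ∀ v : Fin n, v ∉ Dset t n k →
      (GP t n k).neighborSet v ⊆ (G0 t n).neighborSet v ∪ Dset t n k := by
  intro k
  induction k with
  | zero => exact fun _ v _ w hw => Or.inl hw
  | succ k ih =>
    intro hk1 v hv
    have hk : k ≤ t - 3 := by omega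
    have db : ∀ u : Fin n, u ∉ Dset t n (k+1) → dgr (GP t n k) u ≤ t - 3 := by
      intro u hu
      have hu' : u ∉ Dset t n k := fun h => hu (Dset_mono (by omega) h)
      have hsub := ih hk u hu'
      have hDk := Dset_card (t := t) (n := n) ht k
      have hcard : dgr (GP t n k) u ≤ ((G0 t n).neighborSet u).ncard + k := by
        refine le_trans (Set.ncard_le_ncard hsub (Set.toFinite _)) ?_
        refine le_trans (Set.ncard_union_le _ _) ?_
        omega
      by_cases hc : ∃ s, 1 ≤ s ∧ s ≤ t - 2 ∧ (u:ℕ) = ctr s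
      · obtain ⟨s, hs1, hs2, hsv⟩ := hc
        have hs3 : s + k + 1 ≤ t - 2 := by
          by_contra hcon
          exact hu ⟨s, by omega, hs2, hsv⟩
        have hN : ((G0 t n).neighborSet u).ncard ≤ s := by
          refine le_trans (ncard_le_card_of_val (B := Finset.Ioc (ctr s) (ctr s + s)) ?_) ?_
          · intro w hw
            exact Finset.mem_Ioc.2 (G0_center_nbr hs1 hs2 hsv hw)
          · rw [Nat.card_Ioc]; omega
        omega
      · have hN : ((G0 t n).neighborSet u).ncard ≤ 1 :=
          (Set.ncard_le_one_iff (Set.toFinite _)).2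
            (fun ha hb => G0_noncenter_subsingleton hc ha hb)
        omega
    intro w hw
    have hw' : (bootStep (completeBipartiteGraph (Fin 1) (Fin (t-1))) (GP t n k)).Adj v w := hw
    rw [bootStep_star_adj ht] at hw'
    rcases hw' with h | ⟨hne, hd | hd⟩
    · rcases ih hk v (fun h' => hv (Dset_mono (by omega) h')) h with h' | h'
      · exact Or.inl h'
      · exact Or.inr (Dset_mono (by omega) h')
    · have := db v hv
      omega
    · right
      by_contra hw2
      have := db w hw2
      omega

lemma noAdj {t : ℕ} (ht : 2 ≤ t) {x y : Fin n}
    (hx : ctr (t-2) + (t-2) < (x:ℕ)) (hy : ctr (t-2) + (t-2) < (y:ℕ)) :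
    ∀ k, k ≤ t - 2 → ¬(GP t n k).Adj x y := by
  intro k
  induction k with
  | zero =>
    intro _ hadj
    have hmem : y ∈ (G0 t n).neighborSet x := hadj
    rw [G0_iso hx] at hmem
    exact hmem
  | succ k ih =>
    intro hk1 hadj
    have hk : k ≤ t - 2 := by omega
    have hdegb : ∀ z : Fin n, ctr (t-2) + (t-2) < (z:ℕ) → dgr (GP t n k) z ≤ k := by
      intro z hz
      have hzD : z ∉ Dset t n k := by
        rintro ⟨s, h1, h2, h3⟩
        have := ctr_mono h2
        omega
      have hsub := invR ht k (by omega) z hzD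
      rw [G0_iso hz, Set.empty_union] at hsub
      exact le_trans (Set.ncard_le_ncard hsub (Set.toFinite _)) (Dset_card ht k)
    have hadj' : (bootStep (completeBipartiteGraph (Fin 1) (Fin (t-1))) (GP t n k)).Adj x y := hadj
    rw [bootStep_star_adj ht] at hadj'
    rcases hadj' with h | ⟨hne, hd | hd⟩
    · exact ih hk h
    · have := hdegb x hx; omega
    · have := hdegb y hy; omega

lemma invP {t : ℕ} (ht : 2 ≤ t) (hbig : ctr (t-2) + (t-2) + 2 < n) :
    ∀ k, ∀ s, 1 ≤ s → s ≤ t - 2 → t - 1 ≤ s + k →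
      ∀ v u : Fin n, (v:ℕ) = ctr s → u ≠ v → (GP t n k).Adj v u := by
  intro k
  induction k with
  | zero => intro s h1 h2 h3; omega
  | succ k ih =>
    intro s hs1 hs2 hsk v u hv hu
    by_cases hk : t - 1 ≤ s + k
    · exact (le_bootStep _ _) (ih s hs1 hs2 hk v u hv hu)
    · have hsk' : s + k = t - 2 := by omega
      have hdeg : t - 2 ≤ dgr (GP t n k) v := by
        set B : Finset ℕ := Finset.Ioc (ctr s) (ctr s + s) ∪ (Finset.Icc (s+1) (t-2)).image ctr
          with hB
        refine le_trans ?_ (card_le_ncard_of_val (B := B) ?_ ?_)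
        · have hdisj : Disjoint (Finset.Ioc (ctr s) (ctr s + s))
              ((Finset.Icc (s+1) (t-2)).image ctr) := by
            rw [Finset.disjoint_left]
            intro m hm1 hm2
            obtain ⟨s', hs', rfl⟩ := Finset.mem_image.1 hm2
            rw [Finset.mem_Icc] at hs'
            have := ctr_block_lt hs1 (show s < s' by omega)
            rw [Finset.mem_Ioc] at hm1
            omega
          have himg : ((Finset.Icc (s+1) (t-2)).image ctr).card
              = (Finset.Icc (s+1) (t-2)).card := by
            apply Finset.card_image_of_injOn
            intro a ha b hb hab
            rw [Finset.mem_coe, Finset.mem_Icc] at ha hb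
            exact ctr_inj (by omega) (by omega) hab
          rw [hB, Finset.card_union_of_disjoint hdisj, Nat.card_Ioc, himg, Nat.card_Icc]
          omega
        · intro m hm
          rw [hB, Finset.mem_union] at hm
          rcases hm with hm | hm
          · rw [Finset.mem_Ioc] at hm
            have := ctr_add_le hs1 hs2
            omega
          · obtain ⟨s', hs', rfl⟩ := Finset.mem_image.1 hm
            rw [Finset.mem_Icc] at hs'
            have h1 := ctr_mono (show s' ≤ t-2 by omega)
            omega
        · intro w hwB
          rw [hB, Finset.mem_union] at hwB
          rcases hwB with hm | hm
          · rw [Finset.mem_Ioc] at hm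
            exact (le_bootProc _ _ k) (G0_adj_center hs1 hs2 hv hm.1 hm.2)
          · obtain ⟨s', hs', hws'⟩ := Finset.mem_image.1 hm
            rw [Finset.mem_Icc] at hs'
            have hvne : v ≠ w := by
              have := ctr_block_lt hs1 (show s < s' by omega)
              intro h
              rw [h] at hv
              omega
            exact (ih s' (by omega) (by omega) (by omega) w v hws'.symm hvne).symm
      exact step_adj_of_deg ht _ hu.symm hdeg

lemma xdeg {t : ℕ} (ht : 2 ≤ t) (hbig : ctr (t-2) + (t-2) + 2 < n) {x : Fin n}
    (hx : ctr (t-2) + (t-2) < (x:ℕ)) : t - 2 ≤ dgr (GP t n (t-2)) x := by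
  refine le_trans ?_ (card_le_ncard_of_val (B := (Finset.Icc 1 (t-2)).image ctr) ?_ ?_)
  · have himg : ((Finset.Icc 1 (t-2)).image ctr).card = (Finset.Icc 1 (t-2)).card := by
      apply Finset.card_image_of_injOn
      intro a ha b hb hab
      rw [Finset.mem_coe, Finset.mem_Icc] at ha hb
      exact ctr_inj (by omega) (by omega) hab
    rw [himg, Nat.card_Icc]
    omega
  · intro m hm
    obtain ⟨s', hs', rfl⟩ := Finset.mem_image.1 hm
    rw [Finset.mem_Icc] at hs'
    have h1 := ctr_mono (show s' ≤ t-2 by omega)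
    omega
  · intro w hw
    obtain ⟨s', hs', hws'⟩ := Finset.mem_image.1 hw
    rw [Finset.mem_Icc] at hs'
    have hxw : x ≠ w := by
      have := ctr_mono (show s' ≤ t-2 by omega)
      intro h
      rw [h] at hx
      omega
    exact (invP ht hbig (t-2) s' (by omega) (by omega) (by omega) w x hws'.symm hxw).symm

lemma lower_runtime {t : ℕ} (ht : 2 ≤ t) (hn : t ≤ n) (hbig : ctr (t-2) + (t-2) + 2 < n) :
    bootRunTime (completeBipartiteGraph (Fin 1) (Fin (t-1))) (G0 t n) = t - 1 := by
  have hn2 : 2 ≤ n := le_trans ht hn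
  set x : Fin n := ⟨n-1, by omega⟩ with hxdef
  set y : Fin n := ⟨n-2, by omega⟩ with hydef
  have hxv : ctr (t-2) + (t-2) < (x:ℕ) := by
    show ctr (t-2) + (t-2) < n - 1
    omega
  have hyv : ctr (t-2) + (t-2) < (y:ℕ) := by
    show ctr (t-2) + (t-2) < n - 2
    omega
  have hxy : x ≠ y := by
    intro h
    have := congrArg Fin.val h
    simp only [hxdef, hydef] at this
    omega
  have hnot : ¬(GP t n (t-2)).Adj x y := noAdj ht hxv hyv (t-2) le_rfl
  have hyes : (bootProc (completeBipartiteGraph (Fin 1) (Fin (t-1))) (G0 t n) (t-2+1)).Adj x y :=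
    step_adj_of_deg ht _ hxy (xdeg ht hbig hxv)
  obtain ⟨k, hk, hst⟩ := stable_of_big ht hn (G0 t n)
  have hSne : {m | bootProc (completeBipartiteGraph (Fin 1) (Fin (t-1))) (G0 t n) (m+1)
      = bootProc (completeBipartiteGraph (Fin 1) (Fin (t-1))) (G0 t n) m}.Nonempty := ⟨k, hst⟩
  have hmem := Nat.sInf_mem hSne
  unfold bootRunTime
  by_contra hcon
  have hle : sInf {m | bootProc (completeBipartiteGraph (Fin 1) (Fin (t-1))) (G0 t n) (m+1)
      = bootProc (completeBipartiteGraph (Fin 1) (Fin (t-1))) (G0 t n) m} ≤ k :=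
    Nat.sInf_le hst
  have hstab : bootProc (completeBipartiteGraph (Fin 1) (Fin (t-1))) (G0 t n) (t-2+1)
      = bootProc (completeBipartiteGraph (Fin 1) (Fin (t-1))) (G0 t n) (t-2) :=
    bootProc_stable _ _ hmem (by omega)
  rw [hstab] at hyes
  exact hnot hyes

end Invariants

/-- For the star `K_{1,t-1}` on `t` vertices and all sufficiently large `n`, the maximum
running time of the `K_{1,t-1}`-process on `n`-vertex graphs equals `t - 1`. -/
theorem stmt_13 (t : ℕ) (ht : 1 ≤ t) :
    ∃ N : ℕ, ∀ n, N ≤ n →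
      (∀ G : SimpleGraph (Fin n),
        bootRunTime (completeBipartiteGraph (Fin 1) (Fin (t - 1))) G ≤ t - 1) ∧
      (∃ G : SimpleGraph (Fin n),
        bootRunTime (completeBipartiteGraph (Fin 1) (Fin (t - 1))) G = t - 1) := by
  by_cases ht1 : t = 1
  · subst ht1
    refine ⟨0, fun n _ => ?_⟩
    have hstep : ∀ G : SimpleGraph (Fin n),
        bootStep (completeBipartiteGraph (Fin 1) (Fin (1-1))) G = G := by
      intro G
      ext u v
      constructor
      · rintro (h | ⟨hne, f, hf, a, b, hab, h1, h2⟩)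
        · exact h
        · rcases a with a | a
          · rcases b with b | b
            · simp at hab
            · exact b.elim0
          · exact a.elim0
      · exact Or.inl
    have hrt : ∀ G : SimpleGraph (Fin n),
        bootRunTime (completeBipartiteGraph (Fin 1) (Fin (1-1))) G = 0 := by
      intro G
      unfold bootRunTime
      have h0 : (0 : ℕ) ∈ {m | bootProc (completeBipartiteGraph (Fin 1) (Fin (1-1))) G (m+1)
          = bootProc (completeBipartiteGraph (Fin 1) (Fin (1-1))) G m} := by
        show bootStep _ _ = _
        exact hstep G
      exact Nat.eq_zero_of_le_zero (Nat.sInf_le h0)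
    exact ⟨fun G => le_of_eq (hrt G), ⊥, hrt ⊥⟩
  · have ht2 : 2 ≤ t := by omega
    refine ⟨t*t + 4*t + 4, fun n hn => ?_⟩
    have hnt : t ≤ n := by nlinarith
    have hbig : ctr (t-2) + (t-2) + 2 < n := by
      have he : t - 2 - 1 = t - 3 := by omega
      have h1 : sb (t-3) ≤ (t-3)*(t-3) + 2*(t-3) := sb_le _
      have h2 : (t-3)*(t-3) ≤ t*t := Nat.mul_le_mul (Nat.sub_le t 3) (Nat.sub_le t 3)
      have h3 : 2*(t-3) ≤ 2*t := by omega
      have hc : ctr (t-2) = sb (t-3) := by rw [ctr, he]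
      omega
    constructor
    · intro G
      obtain ⟨k, hk, hst⟩ := stable_of_big ht2 hnt G
      exact le_trans (Nat.sInf_le hst) hk
    · exact ⟨G0 t n, lower_runtime ht2 hnt hbig⟩
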